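/- Let M₁,…,M_n be smooth finite-dimensional manifolds without boundary and ι_i : M_i → ℝ^d smooth maps (in particular, inclusions of smooth submanifolds of ℝ^d), and let ι : M₁×⋯×M_n → (ℝ^d)^n be the product map. Then there exists an open dense subset W of M₁×⋯×M_n such that the composition F ∘ ι is C^∞ on W, and such that every θ ∈ W has an open neighborhood on which all the filter functions F(ι(θ')) are ordering equivalent to F(ι(θ)). -/

import Mathlib

open scoped Manifold
open Set

/-- Two functions `f g : K → ℝ` are *ordering equivalent* if they induce the same
pre-order on `K`. -/
def OrderingEquivalent {K : Type*} (f g : K → ℝ) : Prop :=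
  ∀ σ σ' : K, f σ ≤ f σ' ↔ g σ ≤ g σ'

/-- The Rips parametrization: to a point cloud `P` and a nonempty subset `σ` of
`{1,…,n}` it assigns `max_{i,j ∈ σ} ‖pᵢ - pⱼ‖` (Euclidean norm). -/
noncomputable def ripsParam (d n : ℕ) (P : Fin n → EuclideanSpace ℝ (Fin d))
    (σ : {s : Finset (Fin n) // s.Nonempty}) : ℝ :=
  σ.1.sup' σ.2 fun i => σ.1.sup' σ.2 fun j => ‖P i - P j‖

section PiManifold

variable {ι : Type*} [Fintype ι]
  {E : ι → Type*} [∀ i, NormedAddCommGroup (E i)] [∀ i, NormedSpace ℝ (E i)]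
  {H : ι → Type*} [∀ i, TopologicalSpace (H i)]
  (Im : ∀ i, ModelWithCorners ℝ (E i) (H i))
  {M : ι → Type*} [∀ i, TopologicalSpace (M i)] [∀ i, ChartedSpace (H i) (M i)]

lemma extChartAt_pi (x₀ : ∀ i, M i) :
    extChartAt (ModelWithCorners.pi Im) x₀
      = PartialEquiv.pi (fun i => extChartAt (Im i) (x₀ i)) := by
  simp only [extChartAt, OpenPartialHomeomorph.extend, piChartedSpace_chartAt,
    ModelWithCorners.pi, ← PartialEquiv.pi_trans]
  rfl

lemma pi_boundaryless [∀ i, (Im i).Boundaryless] :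
    (ModelWithCorners.pi Im).Boundaryless := by
  constructor
  refine eq_univ_of_forall fun y => ?_
  have h : ∀ i, ∃ x, Im i x = y i := fun i => by
    have : y i ∈ range (Im i) := by
      rw [ModelWithCorners.Boundaryless.range_eq_univ]; trivial
    exact this
  choose x hx using h
  exact ⟨x, funext fun i => hx i⟩

lemma contMDiff_proj_pi [∀ i, (Im i).Boundaryless]
    [∀ i, IsManifold (Im i) ((⊤ : ℕ∞) : WithTop ℕ∞) (M i)] (i : ι) :
    ContMDiff (ModelWithCorners.pi Im) (Im i) (⊤ : ℕ∞) (fun θ : ∀ j, M j => θ i) := by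
  intro x₀
  rw [contMDiffAt_iff]
  refine ⟨(continuous_apply i).continuousAt, ?_⟩
  haveI := pi_boundaryless Im
  rw [ModelWithCorners.Boundaryless.range_eq_univ, contDiffWithinAt_univ]
  have hsymm : ∀ y : ∀ j, E j, (extChartAt (ModelWithCorners.pi Im) x₀).symm y
      = fun j => (extChartAt (Im j) (x₀ j)).symm (y j) := by
    intro y
    rw [extChartAt_pi]
    rfl
  have key : (extChartAt (Im i) (x₀ i) ∘ (fun θ : ∀ j, M j => θ i) ∘
      (extChartAt (ModelWithCorners.pi Im) x₀).symm)
      = (extChartAt (Im i) (x₀ i) ∘ (extChartAt (Im i) (x₀ i)).symm) ∘ (fun y => y i) := by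
    funext y
    simp only [Function.comp_apply]
    rw [hsymm]
  rw [key]
  have hpt : (extChartAt (ModelWithCorners.pi Im) x₀ x₀) i
      = extChartAt (Im i) (x₀ i) (x₀ i) := by
    rw [extChartAt_pi]
    rfl
  have hmem : extChartAt (Im i) (x₀ i) (x₀ i)
      ∈ ((extChartAt (Im i) (x₀ i)).symm ≫ extChartAt (Im i) (x₀ i)).source := by
    rw [PartialEquiv.trans_source]
    refine ⟨mem_extChartAt_target _, ?_⟩
    simp only [mem_preimage, PartialEquiv.symm_symm]
    rw [extChartAt_to_inv]
    exact mem_extChartAt_source _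
  have hcc : ContDiffAt ℝ ((⊤ : ℕ∞) : WithTop ℕ∞) (extChartAt (Im i) (x₀ i) ∘ (extChartAt (Im i) (x₀ i)).symm)
      (extChartAt (Im i) (x₀ i) (x₀ i)) := by
    have h := contDiffWithinAt_ext_coord_change (I := Im i) (n := ((⊤ : ℕ∞) : WithTop ℕ∞)) (x₀ i) (x₀ i) hmem
    rw [ModelWithCorners.Boundaryless.range_eq_univ, contDiffWithinAt_univ] at h
    exact h
  have hproj : ContDiffAt ℝ ((⊤ : ℕ∞) : WithTop ℕ∞) (fun y : ∀ j, E j => y i)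
      (extChartAt (ModelWithCorners.pi Im) x₀ x₀) :=
    (ContinuousLinearMap.proj i : (∀ j, E j) →L[ℝ] E i).contDiff.contDiffAt
  have hcc' := hcc
  rw [← hpt] at hcc'
  exact hcc'.comp (extChartAt (ModelWithCorners.pi Im) x₀ x₀) hproj

end PiManifold

private lemma dense_iInter_finite {X : Type*} [TopologicalSpace X] {ι : Type*} [Fintype ι]
    {s : ι → Set X} (ho : ∀ i, IsOpen (s i)) (hd : ∀ i, Dense (s i)) :
    Dense (⋂ i, s i) := by
  classical
  have key : ∀ t : Finset ι, Dense (⋂ i ∈ t, s i) := by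
    intro t
    induction t using Finset.induction with
    | empty => simp
    | insert _ _ hne ih =>
      rw [Finset.set_biInter_insert]
      exact (hd _).inter_of_isOpen_left ih (ho _)
  have h := key Finset.univ
  simpa using h

/-- Let `M₁,…,M_n` be smooth manifolds without boundary and
`ι_i : M_i → ℝ^d` smooth maps, with `ι : M₁ × ⋯ × M_n → (ℝ^d)^n` the product map.
Then there is an open dense subset `W` of `M₁ × ⋯ × M_n` such that the Rips
parametrization composed with `ι` is `C^∞` on `W`, and every `θ ∈ W` has an open
neighborhood on which all filter functions `F(ι(θ'))` are ordering equivalent to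
`F(ι(θ))`. -/
theorem ripsParam_comp_submanifolds_generically_smooth
    {n d : ℕ}
    {E : Fin n → Type*} [∀ i, NormedAddCommGroup (E i)] [∀ i, NormedSpace ℝ (E i)]
    [∀ i, FiniteDimensional ℝ (E i)]
    {H : Fin n → Type*} [∀ i, TopologicalSpace (H i)]
    (Im : ∀ i, ModelWithCorners ℝ (E i) (H i)) [∀ i, (Im i).Boundaryless]
    {M : Fin n → Type*} [∀ i, TopologicalSpace (M i)] [∀ i, ChartedSpace (H i) (M i)]
    [∀ i, IsManifold (Im i) ((⊤ : ℕ∞) : WithTop ℕ∞) (M i)]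
    (ι : ∀ i, M i → EuclideanSpace ℝ (Fin d))
    (hι : ∀ i, ContMDiff (Im i) 𝓘(ℝ, EuclideanSpace ℝ (Fin d)) (⊤ : ℕ∞) (ι i)) :
    ∃ W : Set (∀ i, M i), IsOpen W ∧ Dense W ∧
      ContMDiffOn (ModelWithCorners.pi Im)
          𝓘(ℝ, {s : Finset (Fin n) // s.Nonempty} → ℝ) (⊤ : ℕ∞)
          (fun θ => ripsParam d n (fun i => ι i (θ i))) W ∧
      ∀ θ ∈ W, ∃ U : Set (∀ i, M i), IsOpen U ∧ θ ∈ U ∧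
        ∀ θ' ∈ U,
          OrderingEquivalent (ripsParam d n (fun i => ι i (θ' i)))
            (ripsParam d n (fun i => ι i (θ i))) := by
  classical
  set g : Fin n × Fin n → (∀ i, M i) → ℝ :=
    fun e θ => ‖ι e.1 (θ e.1) - ι e.2 (θ e.2)‖ with hg_def
  set Q : Fin n × Fin n → (∀ i, M i) → ℝ :=
    fun e θ => ‖ι e.1 (θ e.1) - ι e.2 (θ e.2)‖ ^ 2 with hQ_def
  have hQsm : ∀ e, ContMDiff (ModelWithCorners.pi Im) 𝓘(ℝ, ℝ) (⊤ : ℕ∞) (Q e) := by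
    intro e
    have h1 : ContMDiff (ModelWithCorners.pi Im) 𝓘(ℝ, EuclideanSpace ℝ (Fin d)) (⊤ : ℕ∞)
        (fun θ : ∀ i, M i => ι e.1 (θ e.1) - ι e.2 (θ e.2)) :=
      ((hι e.1).comp (contMDiff_proj_pi Im e.1)).sub
        ((hι e.2).comp (contMDiff_proj_pi Im e.2))
    exact (contDiff_norm_sq ℝ (E := EuclideanSpace ℝ (Fin d))).comp_contMDiff h1
  have hQcont : ∀ e, Continuous (Q e) := fun e => (hQsm e).continuous
  set A : Fin n × Fin n → Fin n × Fin n → Set (∀ i, M i) :=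
    fun e e' => {θ | Q e θ ≠ Q e' θ} ∪ interior {θ | Q e θ = Q e' θ} with hA_def
  have hAopen : ∀ e e', IsOpen (A e e') := fun e e' =>
    ((isClosed_eq (hQcont e) (hQcont e')).isOpen_compl).union isOpen_interior
  have hAdense : ∀ e e', Dense (A e e') := by
    intro e e'
    rw [dense_iff_inter_open]
    intro U hU hUne
    by_cases h : ∃ x ∈ U, Q e x ≠ Q e' x
    · obtain ⟨x, hxU, hx⟩ := h
      exact ⟨x, hxU, Or.inl hx⟩
    · push_neg at h
      obtain ⟨x, hx⟩ := hUne
      exact ⟨x, hx, Or.inr (interior_maximal (fun y hy => h y hy) hU hx)⟩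
  set W : Set (∀ i, M i) := ⋂ p : (Fin n × Fin n) × (Fin n × Fin n), A p.1 p.2 with hW_def
  have hWopen : IsOpen W := isOpen_iInter_of_finite fun p => hAopen p.1 p.2
  have hWdense : Dense W :=
    dense_iInter_finite (fun p => hAopen p.1 p.2) (fun p => hAdense p.1 p.2)
  -- order on g vs Q
  have hgQ : ∀ (θ : ∀ i, M i) (e e' : Fin n × Fin n),
      (g e θ ≤ g e' θ ↔ Q e θ ≤ Q e' θ) := by
    intro θ e e'
    simp only [hg_def, hQ_def]
    exact (pow_le_pow_iff_left₀ (norm_nonneg _) (norm_nonneg _) (by norm_num)).symm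
  -- ripsParam as sup of g
  have hrips : ∀ (θ : ∀ i, M i) (σ : {s : Finset (Fin n) // s.Nonempty}),
      ripsParam d n (fun i => ι i (θ i)) σ
        = σ.1.sup' σ.2 (fun i => σ.1.sup' σ.2 fun j => g (i, j) θ) := fun _ _ => rfl
  -- argmax
  have argmax : ∀ (θ : ∀ i, M i) (σ : {s : Finset (Fin n) // s.Nonempty}),
      ∃ i₀ j₀ : Fin n, i₀ ∈ σ.1 ∧ j₀ ∈ σ.1 ∧
        ripsParam d n (fun i => ι i (θ i)) σ = g (i₀, j₀) θ ∧
        ∀ i ∈ σ.1, ∀ j ∈ σ.1, g (i, j) θ ≤ g (i₀, j₀) θ := by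
    intro θ σ
    obtain ⟨i₀, hi₀, h1⟩ :=
      Finset.exists_mem_eq_sup' σ.2 (fun i => σ.1.sup' σ.2 fun j => g (i, j) θ)
    obtain ⟨j₀, hj₀, h2⟩ := Finset.exists_mem_eq_sup' σ.2 (fun j => g (i₀, j) θ)
    refine ⟨i₀, j₀, hi₀, hj₀, by rw [hrips, h1, h2], ?_⟩
    intro i hi j hj
    calc g (i, j) θ ≤ σ.1.sup' σ.2 (fun j => g (i, j) θ) :=
          Finset.le_sup' (fun j => g (i, j) θ) hj
      _ ≤ σ.1.sup' σ.2 (fun i => σ.1.sup' σ.2 fun j => g (i, j) θ) :=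
          Finset.le_sup' (fun i => σ.1.sup' σ.2 fun j => g (i, j) θ) hi
      _ = g (i₀, j₀) θ := by rw [h1, h2]
  -- main local structure
  have main : ∀ θ ∈ W, ∃ U : Set (∀ i, M i), IsOpen U ∧ θ ∈ U ∧
      (∀ θ' ∈ U, ∀ e e' : Fin n × Fin n, (Q e θ' ≤ Q e' θ' ↔ Q e θ ≤ Q e' θ)) ∧
      ∀ σ : {s : Finset (Fin n) // s.Nonempty}, ∃ e : Fin n × Fin n,
        (∀ θ' ∈ U, ripsParam d n (fun i => ι i (θ' i)) σ = g e θ') := by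
    intro θ hθ
    have key : ∀ e e' : Fin n × Fin n, ∃ V : Set (∀ i, M i), IsOpen V ∧ θ ∈ V ∧
        ∀ θ' ∈ V, (Q e θ' ≤ Q e' θ' ↔ Q e θ ≤ Q e' θ) := by
      intro e e'
      have hmem : θ ∈ A e e' := Set.mem_iInter.1 hθ (e, e')
      rcases hmem with hne | hint
      · rcases lt_or_gt_of_ne hne with hlt | hgt
        · exact ⟨{θ' | Q e θ' < Q e' θ'}, isOpen_lt (hQcont e) (hQcont e'), hlt,
            fun θ' hθ' => iff_of_true (le_of_lt hθ') (le_of_lt hlt)⟩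
        · exact ⟨{θ' | Q e' θ' < Q e θ'}, isOpen_lt (hQcont e') (hQcont e), hgt,
            fun θ' hθ' => iff_of_false (not_le.2 hθ') (not_le.2 hgt)⟩
      · refine ⟨interior {θ' | Q e θ' = Q e' θ'}, isOpen_interior, hint, fun θ' hθ' => ?_⟩
        have h1 := interior_subset hθ'
        have h2 := interior_subset hint
        rw [Set.mem_setOf_eq] at h1 h2
        exact iff_of_true h1.le h2.le
    choose V hVopen hVmem hVord using fun p : (Fin n × Fin n) × (Fin n × Fin n) =>
      key p.1 p.2
    refine ⟨⋂ p, V p, isOpen_iInter_of_finite hVopen, Set.mem_iInter.2 hVmem, ?_, ?_⟩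
    · intro θ' hθ' e e'
      exact hVord (e, e') θ' (Set.mem_iInter.1 hθ' (e, e'))
    · intro σ
      obtain ⟨i₀, j₀, hi₀, hj₀, heq, hmax⟩ := argmax θ σ
      refine ⟨(i₀, j₀), fun θ' hθ' => ?_⟩
      have hord : ∀ e e' : Fin n × Fin n, (Q e θ' ≤ Q e' θ' ↔ Q e θ ≤ Q e' θ) :=
        fun e e' => hVord (e, e') θ' (Set.mem_iInter.1 hθ' (e, e'))
      apply le_antisymm
      · rw [hrips]
        refine Finset.sup'_le _ _ fun i hi => Finset.sup'_le _ _ fun j hj => ?_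
        rw [hgQ θ' (i, j) (i₀, j₀), hord (i, j) (i₀, j₀), ← hgQ θ (i, j) (i₀, j₀)]
        exact hmax i hi j hj
      · rw [hrips]
        calc g (i₀, j₀) θ' ≤ σ.1.sup' σ.2 (fun j => g (i₀, j) θ') :=
            Finset.le_sup' (fun j => g (i₀, j) θ') hj₀
          _ ≤ σ.1.sup' σ.2 (fun i => σ.1.sup' σ.2 fun j => g (i, j) θ') :=
            Finset.le_sup' (fun i => σ.1.sup' σ.2 fun j => g (i, j) θ') hi₀
  refine ⟨W, hWopen, hWdense, ?_, ?_⟩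
  · -- smoothness
    intro θ hθ
    apply ContMDiffAt.contMDiffWithinAt
    rw [contMDiffAt_pi_space]
    intro σ
    obtain ⟨U, hUo, hθU, hord, hfix⟩ := main θ hθ
    obtain ⟨e, hloc⟩ := hfix σ
    have hev : (fun θ' => ripsParam d n (fun i => ι i (θ' i)) σ) =ᶠ[nhds θ] g e := by
      filter_upwards [hUo.mem_nhds hθU] with θ' hθ' using hloc θ' hθ'
    refine ContMDiffAt.congr_of_eventuallyEq ?_ hev
    by_cases h0 : Q e θ = 0
    · have hmem : θ ∈ A e (e.1, e.1) := Set.mem_iInter.1 hθ (e, (e.1, e.1))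
      have hQii : ∀ θ' : ∀ i, M i, Q (e.1, e.1) θ' = 0 := by
        intro θ'; simp [hQ_def]
      rcases hmem with hne | hint
      · exact absurd (by rw [h0, hQii]) hne
      · have hz : (g e) =ᶠ[nhds θ] (fun _ => (0 : ℝ)) := by
          filter_upwards [isOpen_interior.mem_nhds hint] with θ' hθ'
          have h1 : Q e θ' = 0 := by
            have := interior_subset hθ'
            rw [Set.mem_setOf_eq] at this
            rw [this, hQii]
          have h2 : g e θ' ^ 2 = 0 := h1
          exact pow_eq_zero_iff (n := 2) (by norm_num) |>.1 h2
        exact ContMDiffAt.congr_of_eventuallyEq contMDiffAt_const hz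
    · have hge : g e = fun θ' => Real.sqrt (Q e θ') := by
        funext θ'
        simp only [hg_def, hQ_def]
        rw [Real.sqrt_sq (norm_nonneg _)]
      rw [hge]
      exact (Real.contDiffAt_sqrt h0).comp_contMDiffAt (hQsm e).contMDiffAt
  · -- ordering equivalence
    intro θ hθ
    obtain ⟨U, hUo, hθU, hord, hfix⟩ := main θ hθ
    refine ⟨U, hUo, hθU, ?_⟩
    intro θ' hθ' σ σ'
    obtain ⟨e, he⟩ := hfix σ
    obtain ⟨e', he'⟩ := hfix σ'
    rw [he θ' hθ', he' θ' hθ', he θ hθU, he' θ hθU, hgQ θ' e e', hgQ θ e e']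
    exact hord θ' hθ' e e'
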